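/- The determinant of K̄ equals −Σ_{i=1}^3 Σ_{j=1}^3 ( |θ¹_i θ¹_j|² + (1/2)|θ²_i θ¹_j − θ¹_i θ²_j + (f_i − f_j)θ¹_i θ¹_j|² ) e^{f_i + f_j}; in particular, if at least one of θ¹_1, θ¹_2, θ¹_3 is nonzero, then det K̄ ≠ 0. -/

import Mathlib

open scoped BigOperators ComplexConjugate

/-- Explicit formula for `det K̄` in the second-order soliton of
the three-wave system, and its non-vanishing when `θ¹ ≠ 0`. -/
theorem det_Kbar (η : ℝ) (hη : η ≠ 0)
    (f : Fin 3 → ℝ) (θ1 θ2 : Fin 3 → ℂ)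
    (Kbar : Matrix (Fin 2) (Fin 2) ℂ)
    (h11 : Kbar 0 0 = -2 * Complex.I * (η : ℂ) *
      ∑ j, (((‖θ1 j‖) ^ 2 * Real.exp (f j) : ℝ) : ℂ))
    (h12 : Kbar 0 1 = -∑ j,
      (conj (θ1 j) * θ2 j +
          (((f j - 1 : ℝ)) : ℂ) * (((‖θ1 j‖) ^ 2 : ℝ) : ℂ)) *
        ((Real.exp (f j) : ℝ) : ℂ))
    (h21 : Kbar 1 0 = ∑ j,
      (θ1 j * conj (θ2 j) +
          (((f j - 1 : ℝ)) : ℂ) * (((‖θ1 j‖) ^ 2 : ℝ) : ℂ)) *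
        ((Real.exp (f j) : ℝ) : ℂ))
    (h22 : Kbar 1 1 = (1 / (2 * Complex.I * (η : ℂ))) * ∑ j,
      ((((‖θ2 j + (((f j - 1 : ℝ)) : ℂ) * θ1 j‖) ^ 2 +
          (‖θ1 j‖) ^ 2 : ℝ)) : ℂ) *
        ((Real.exp (f j) : ℝ) : ℂ)) :
    Kbar.det = -∑ i, ∑ j,
        ((((‖θ1 i * θ1 j‖) ^ 2 +
            (1 / 2) * (‖θ2 i * θ1 j - θ1 i * θ2 j +
              (((f i - f j : ℝ)) : ℂ) * (θ1 i * θ1 j)‖) ^ 2) *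
          Real.exp (f i + f j) : ℝ) : ℂ) ∧
      ((∃ j, θ1 j ≠ 0) → Kbar.det ≠ 0) := by
  have hη' : (η : ℂ) ≠ 0 := by exact_mod_cast hη
  have hI : Complex.I ≠ 0 := Complex.I_ne_zero
  have key : Kbar.det = -∑ i, ∑ j,
        ((((‖θ1 i * θ1 j‖) ^ 2 +
            (1 / 2) * (‖θ2 i * θ1 j - θ1 i * θ2 j +
              (((f i - f j : ℝ)) : ℂ) * (θ1 i * θ1 j)‖) ^ 2) *
          Real.exp (f i + f j) : ℝ) : ℂ) := by
    rw [Matrix.det_fin_two, h11, h12, h21, h22]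
    simp only [Fin.sum_univ_three, Complex.sq_norm]
    push_cast [Real.exp_add]
    simp only [← Complex.mul_conj]
    simp only [map_add, map_sub, map_mul, map_one, Complex.conj_ofReal,
      Complex.conj_conj]
    field_simp
    ring
  refine ⟨key, fun ⟨j0, hj0⟩ => ?_⟩
  rw [key]
  have hS : (0 : ℝ) < ∑ i, ∑ j,
      (((‖θ1 i * θ1 j‖) ^ 2 +
            (1 / 2) * (‖θ2 i * θ1 j - θ1 i * θ2 j +
              (((f i - f j : ℝ)) : ℂ) * (θ1 i * θ1 j)‖) ^ 2) *
          Real.exp (f i + f j)) := by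
    apply Finset.sum_pos'
    · intro i _
      apply Finset.sum_nonneg
      intro j _
      positivity
    · refine ⟨j0, Finset.mem_univ _, ?_⟩
      apply Finset.sum_pos'
      · intro j _; positivity
      · refine ⟨j0, Finset.mem_univ _, ?_⟩
        have h1 : ‖θ1 j0 * θ1 j0‖ > 0 := by
          simpa using mul_pos (norm_pos_iff.mpr hj0) (norm_pos_iff.mpr hj0)
        positivity
  simp only [← Complex.ofReal_sum, ← Complex.ofReal_neg, ne_eq,
    Complex.ofReal_eq_zero]
  exact neg_ne_zero.mpr hS.ne'
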